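/- Let p and q be distinct primes, let n ≥ 1, and let G be a nonabelian semidirect product ℤ/p ⋊ ℤ/qⁿ. If there exists an injective group homomorphism from G into SO(4), the group of 4×4 real orthogonal matrices of determinant 1, then q = 2. -/
import Mathlib

open Polynomial
open scoped Matrix

lemma spec_isRoot_charpoly {m : Type*} [Fintype m] [DecidableEq m]
    {M : Matrix m m ℂ} {μ : ℂ} (h : μ ∈ spectrum ℂ M) :
    M.charpoly.IsRoot μ := by
  rw [spectrum.mem_iff, Matrix.isUnit_iff_isUnit_det, isUnit_iff_ne_zero, not_not] at h
  have key : M.charpoly.eval μ = (algebraMap ℂ (Matrix m m ℂ) μ - M).det := by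
    rw [Matrix.charpoly, ← Polynomial.coe_evalRingHom, RingHom.map_det]
    congr 1
    ext i j
    simp [Matrix.charmatrix_apply, Matrix.algebraMap_matrix_apply, Matrix.diagonal_apply,
      apply_ite (Polynomial.eval μ), Matrix.sub_apply]
  exact key.trans h

lemma spec_transpose {m : Type*} [Fintype m] [DecidableEq m] (M : Matrix m m ℂ) :
    spectrum ℂ Mᵀ = spectrum ℂ M := by
  have key : ∀ μ : ℂ, algebraMap ℂ (Matrix m m ℂ) μ - Mᵀ = (algebraMap ℂ (Matrix m m ℂ) μ - M)ᵀ := by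
    intro μ
    rw [Matrix.transpose_sub]
    congr 1
    rw [Algebra.algebraMap_eq_smul_one, Matrix.transpose_smul, Matrix.transpose_one]
  ext μ
  simp only [spectrum.mem_iff, Matrix.isUnit_iff_isUnit_det, key, Matrix.det_transpose]

theorem stmt_2 (p q n : ℕ) (hp : p.Prime) (hq : q.Prime) (hpq : p ≠ q) (hn : 1 ≤ n)
    (φ : Multiplicative (ZMod (q ^ n)) →* MulAut (Multiplicative (ZMod p)))
    (hφ : Nat.card φ.range = q)
    (f : (Multiplicative (ZMod p) ⋊[φ] Multiplicative (ZMod (q ^ n))) →*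
      Matrix.specialOrthogonalGroup (Fin 4) ℝ)
    (hf : Function.Injective f) :
    q = 2 := by
  by_contra hq2
  haveI : Fact p.Prime := ⟨hp⟩
  have hp1 : 1 < p := hp.one_lt
  haveI : Fact (1 < p) := ⟨hp1⟩
  have hq3 : 3 ≤ q := by
    have := hq.two_le; omega
  have hqodd : ¬ 2 ∣ q := by
    intro h
    rcases (hq.eq_one_or_self_of_dvd 2 h) with h' | h' <;> omega
  -- obtain a nontrivial automorphism in the range of φ
  have hne_bot : φ.range ≠ ⊥ := by
    intro hbot
    rw [hbot, Subgroup.card_bot] at hφ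
    omega
  obtain ⟨⟨y, g, hgy⟩, hz⟩ := Subgroup.ne_bot_iff_exists_ne_one.mp hne_bot
  have hα1 : φ g ≠ 1 := by
    intro h
    exact hz (Subtype.ext (by simp [← hgy, h]))
  set α := φ g with hα
  have hord_dvd : orderOf α ∣ q := by
    rw [← hφ]
    exact Subgroup.orderOf_dvd_natCard φ.range ⟨g, rfl⟩
  have hordα : orderOf α = q := by
    rcases hq.eq_one_or_self_of_dvd _ hord_dvd with h | h
    · exact absurd (orderOf_eq_one_iff.mp h) hα1
    · exact h
  -- the automorphism acts as multiplication by c on ZMod p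
  set x₀ : Multiplicative (ZMod p) := Multiplicative.ofAdd (1 : ZMod p) with hx₀
  set c : ZMod p := Multiplicative.toAdd (α x₀) with hc
  have hofAdd_pow : ∀ (w : ZMod p) (m : ℕ),
      (Multiplicative.ofAdd w) ^ m = Multiplicative.ofAdd ((m : ZMod p) * w) := by
    intro w m
    rw [← ofAdd_nsmul]
    congr 1
    rw [nsmul_eq_mul]
  have happly : ∀ z : ZMod p, α (Multiplicative.ofAdd z) = Multiplicative.ofAdd (c * z) := by
    intro z
    have hz' : Multiplicative.ofAdd z = x₀ ^ z.val := by
      rw [hofAdd_pow, mul_one, ZMod.natCast_zmod_val]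
    rw [hz', map_pow, ← ofAdd_toAdd (α x₀), ← hc, hofAdd_pow, ZMod.natCast_zmod_val, mul_comm]
  have hiter : ∀ (j : ℕ) (z : ZMod p),
      (α ^ j) (Multiplicative.ofAdd z) = Multiplicative.ofAdd (c ^ j * z) := by
    intro j
    induction j with
    | zero => intro z; simp
    | succ j ih =>
      intro z
      rw [pow_succ, MulAut.mul_apply, happly, ih]
      congr 1
      ring
  have hcq : c ^ q = 1 := by
    have h1 : α ^ q = 1 := by rw [← hordα]; exact pow_orderOf_eq_one α
    have h2 := hiter q (1 : ZMod p)
    rw [h1, mul_one] at h2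
    simpa using h2.symm
  have hc1 : c ≠ 1 := by
    intro h
    apply hα1
    ext w
    rw [← ofAdd_toAdd w, happly, h, one_mul]
    rfl
  have hc0 : c ≠ 0 := by
    intro h
    rw [h, zero_pow hq.pos.ne'] at hcq
    exact zero_ne_one hcq
  have hordc : orderOf c = q := by
    rcases hq.eq_one_or_self_of_dvd _ (orderOf_dvd_of_pow_eq_one hcq) with h | h
    · exact absurd (orderOf_eq_one_iff.mp h) hc1
    · exact h
  have hcu : IsUnit c := IsUnit.of_pow_eq_one hcq hq.pos.ne'
  have hcuval : (hcu.unit : ZMod p) = c := hcu.unit_spec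
  have hordcu : orderOf hcu.unit = q := by rw [← orderOf_units, hcuval, hordc]
  have hcmod : ∀ a b : ℕ, c ^ a = c ^ b → a ≡ b [MOD q] := by
    intro a b hab
    have h1 : hcu.unit ^ a = hcu.unit ^ b := Units.ext (by simpa [hcuval] using hab)
    have h2 := pow_eq_pow_iff_modEq.mp h1
    rwa [hordcu] at h2
  have hdvd : q ∣ p - 1 := hordc ▸ ZMod.orderOf_dvd_card_sub_one hc0
  have hp4 : 4 ≤ p := by
    have := Nat.le_of_dvd (by omega) hdvd
    omega
  have h2p : (2 : ZMod p) ≠ 0 := by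
    intro h
    have h' : ((2 : ℕ) : ZMod p) = 0 := by exact_mod_cast h
    rw [ZMod.natCast_eq_zero_iff] at h'
    have := Nat.le_of_dvd (by omega) h'
    omega
  set k : ℕ := c.val with hk
  -- semidirect product elements
  set ξ : Multiplicative (ZMod p) ⋊[φ] Multiplicative (ZMod (q ^ n)) :=
    SemidirectProduct.inl x₀ with hξ
  set γ : Multiplicative (ZMod p) ⋊[φ] Multiplicative (ZMod (q ^ n)) :=
    SemidirectProduct.inr g with hγ
  have hx₀k : x₀ ^ k = α x₀ := by
    rw [hx₀, hofAdd_pow, mul_one, hk, ZMod.natCast_zmod_val, hc, ofAdd_toAdd]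
  have hrel : ξ ^ k = γ * ξ * γ⁻¹ := by
    rw [hξ, hγ, ← map_pow, hx₀k, ← map_inv, SemidirectProduct.inl_aut]
  have hξp : ξ ^ p = 1 := by
    rw [hξ, ← map_pow, hx₀, hofAdd_pow, mul_one, ZMod.natCast_self]
    simp
  have hξ1 : ξ ≠ 1 := by
    rw [hξ]
    intro h
    have h1 : x₀ = 1 := SemidirectProduct.inl_injective (by rw [h, map_one])
    have h2 : (1 : ZMod p) = 0 := by
      have := congrArg Multiplicative.toAdd h1
      simpa [hx₀] using this
    exact one_ne_zero h2
  -- matrix realization over ℂ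
  set σmap : Matrix (Fin 4) (Fin 4) ℝ →+* Matrix (Fin 4) (Fin 4) ℂ :=
    (algebraMap ℝ ℂ).mapMatrix with hσmap
  set h : (Multiplicative (ZMod p) ⋊[φ] Multiplicative (ZMod (q ^ n))) →*
      Matrix (Fin 4) (Fin 4) ℂ :=
    σmap.toMonoidHom.comp (((Matrix.specialOrthogonalGroup (Fin 4) ℝ).subtype).comp f) with hh
  set A : Matrix (Fin 4) (Fin 4) ℂ := h ξ with hA
  have hAdef : A = σmap ((f ξ : Matrix (Fin 4) (Fin 4) ℝ)) := rfl
  have hσinj : Function.Injective σmap := by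
    intro M N hMN
    ext i j
    have := congrArg (fun X => X i j) hMN
    simp only [hσmap, RingHom.mapMatrix_apply, Matrix.map_apply] at this
    exact (algebraMap ℝ ℂ).injective this
  have hA1 : A ≠ 1 := by
    intro hA1
    apply hξ1
    apply hf
    rw [map_one]
    have h1 : σmap ((f ξ : Matrix (Fin 4) (Fin 4) ℝ)) = σmap 1 := by
      rw [map_one]; rw [← hAdef]; exact hA1
    exact Subtype.ext (hσinj h1)
  have hAp : A ^ p = 1 := by rw [hA, ← map_pow, hξp, map_one]
  set hU := h.toHomUnits with hhU
  have hAval : A = ↑(hU ξ) := (h.coe_toHomUnits ξ).symm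
  have hconj : spectrum ℂ (A ^ k) = spectrum ℂ A := by
    have h2 : hU ξ ^ k = hU γ * hU ξ * (hU γ)⁻¹ := by
      rw [← map_pow, hrel, map_mul, map_mul, map_inv]
    have h3 : A ^ k = (↑(hU γ) : Matrix (Fin 4) (Fin 4) ℂ) * A *
        (↑((hU γ)⁻¹) : Matrix (Fin 4) (Fin 4) ℂ) := by
      rw [hAval, ← Units.val_pow_eq_pow_val, h2, Units.val_mul, Units.val_mul]
    rw [h3, spectrum.units_conjugate]
  -- orthogonality
  have hMortho : ((f ξ : Matrix (Fin 4) (Fin 4) ℝ))ᵀ * (f ξ : Matrix (Fin 4) (Fin 4) ℝ) = 1 := by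
    have h1 : (f ξ : Matrix (Fin 4) (Fin 4) ℝ) ∈ Matrix.orthogonalGroup (Fin 4) ℝ :=
      (Matrix.mem_specialOrthogonalGroup_iff.mp (f ξ).2).1
    rw [Matrix.mem_unitaryGroup_iff'] at h1
    have hstar : star ((f ξ : Matrix (Fin 4) (Fin 4) ℝ)) = ((f ξ : Matrix (Fin 4) (Fin 4) ℝ))ᵀ := by
      ext i j
      simp [Matrix.star_eq_conjTranspose, Matrix.conjTranspose_apply]
    rw [← hstar]
    exact h1
  have hAt : Aᵀ * A = 1 := by
    have h1 : Aᵀ = σmap (((f ξ : Matrix (Fin 4) (Fin 4) ℝ))ᵀ) := by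
      rw [hAdef]
      simp only [hσmap, RingHom.mapMatrix_apply]
      exact Matrix.transpose_map.symm
    rw [h1, hAdef, ← _root_.map_mul, hMortho, _root_.map_one]
  have hUinv : (↑((hU ξ)⁻¹) : Matrix (Fin 4) (Fin 4) ℂ) = Aᵀ := by
    have h3 : A * (↑((hU ξ)⁻¹) : Matrix (Fin 4) (Fin 4) ℂ) = 1 := by
      rw [hAval]; exact Units.mul_inv _
    calc (↑((hU ξ)⁻¹) : Matrix (Fin 4) (Fin 4) ℂ) = 1 * ↑((hU ξ)⁻¹) := (one_mul _).symm
    _ = (Aᵀ * A) * ↑((hU ξ)⁻¹) := by rw [hAt]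
    _ = Aᵀ * (A * ↑((hU ξ)⁻¹)) := by rw [mul_assoc]
    _ = Aᵀ := by rw [h3, mul_one]
  have hσ_inv : ∀ μ ∈ spectrum ℂ A, μ ≠ 0 → μ⁻¹ ∈ spectrum ℂ A := by
    intro μ hμ hμ0
    have h1 : (↑(Units.mk0 μ hμ0) : ℂ) ∈ spectrum ℂ (↑(hU ξ) : Matrix (Fin 4) (Fin 4) ℂ) := by
      rw [← hAval]; exact hμ
    have h2 := spectrum.inv_mem_iff.mp h1
    rw [hUinv, spec_transpose] at h2
    simpa using h2
  have hσ_powk : ∀ μ ∈ spectrum ℂ A, μ ^ k ∈ spectrum ℂ A := by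
    intro μ hμ
    have h1 : μ ^ k ∈ spectrum ℂ (A ^ k) :=
      spectrum.pow_image_subset A k ⟨μ, hμ, rfl⟩
    rwa [hconj] at h1
  -- nonempty spectrum, and an eigenvalue different from 1
  have hne : (spectrum ℂ A).Nonempty :=
    spectrum.nonempty_of_isAlgClosed_of_finiteDimensional ℂ A
  have hμp : ∀ μ ∈ spectrum ℂ A, μ ^ p = 1 := by
    intro μ hμ
    have h1 : μ ^ p ∈ spectrum ℂ (A ^ p) := spectrum.pow_image_subset A p ⟨μ, hμ, rfl⟩
    rw [hAp, spectrum.one_eq] at h1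
    simpa using h1
  have hlam : ∃ lam ∈ spectrum ℂ A, lam ≠ 1 := by
    by_contra hcon
    push_neg at hcon
    have hσ1 : spectrum ℂ A = {1} := Set.eq_singleton_iff_nonempty_unique_mem.mpr ⟨hne, hcon⟩
    set P : ℂ[X] := ∑ i ∈ Finset.range p, X ^ i with hP
    have hSunit : IsUnit (aeval A P) := by
      by_contra hS
      have h0 : (0 : ℂ) ∈ spectrum ℂ (aeval A P) := (spectrum.zero_mem_iff ℂ).mpr hS
      rw [spectrum.map_polynomial_aeval_of_nonempty A P hne, hσ1] at h0
      simp only [Set.image_singleton, Set.mem_singleton_iff] at h0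
      rw [hP] at h0
      simp only [eval_finset_sum, eval_pow, eval_X, one_pow, Finset.sum_const,
        Finset.card_range, smul_eq_mul, mul_one] at h0
      have h0' : (p : ℂ) = 0 := by simpa using h0.symm
      rw [Nat.cast_eq_zero] at h0'
      omega
    have hgeom : (aeval A P) * (A - 1) = 0 := by
      have h1 : aeval A P = ∑ i ∈ Finset.range p, A ^ i := by
        rw [hP, map_sum]
        simp
      rw [h1, geom_sum_mul, hAp, sub_self]
    obtain ⟨u, hu⟩ := hSunit
    have h2 : A - 1 = 0 := by
      calc A - 1 = ↑u⁻¹ * (↑u * (A - 1)) := by rw [← mul_assoc, Units.inv_mul, one_mul]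
      _ = 0 := by rw [hu, hgeom, mul_zero]
    exact hA1 (by rwa [sub_eq_zero] at h2)
  obtain ⟨lam, hlamσ, hlam1⟩ := hlam
  have hlamp : lam ^ p = 1 := hμp lam hlamσ
  have hlam0 : lam ≠ 0 := by
    intro h0
    rw [h0, zero_pow hp.pos.ne'] at hlamp
    exact zero_ne_one hlamp
  have hordlam : orderOf lam = p := orderOf_eq_prime hlamp hlam1
  have hlu : IsUnit lam := IsUnit.of_pow_eq_one hlamp hp.pos.ne'
  have hluval : (hlu.unit : ℂ) = lam := hlu.unit_spec
  have hordlu : orderOf hlu.unit = p := by rw [← orderOf_units, hluval, hordlam]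
  have hlmod : ∀ a b : ℕ, lam ^ a = lam ^ b → a ≡ b [MOD p] := by
    intro a b hab
    have h1 : hlu.unit ^ a = hlu.unit ^ b := Units.ext (by simpa [hluval] using hab)
    have h2 := pow_eq_pow_iff_modEq.mp h1
    rwa [hordlu] at h2
  set powz : ZMod p → ℂ := fun z => lam ^ z.val with hpowz
  have hpowz_inj : Function.Injective powz := by
    intro z w hzw
    have hzw' : lam ^ z.val = lam ^ w.val := hzw
    have h1 := hlmod _ _ hzw'
    exact ZMod.val_injective p (h1.eq_of_lt_of_lt (ZMod.val_lt z) (ZMod.val_lt w))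
  have hpow_mul : ∀ z w : ZMod p, powz (z * w) = powz z ^ w.val := by
    intro z w
    show lam ^ (z * w).val = (lam ^ z.val) ^ w.val
    have hmo := pow_mod_orderOf lam (z.val * w.val)
    rw [hordlam] at hmo
    rw [← pow_mul, ZMod.val_mul]
    exact hmo
  have hpow_neg : ∀ z : ZMod p, powz (-z) = (powz z)⁻¹ := by
    intro z
    have h1 : powz (-z) * powz z = 1 := by
      show lam ^ (-z).val * lam ^ z.val = 1
      have hmo := pow_mod_orderOf lam ((-z).val + z.val)
      rw [hordlam] at hmo
      rw [← pow_add, ← hmo, ← ZMod.val_add, neg_add_cancel, ZMod.val_zero, pow_zero]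
    exact eq_inv_of_mul_eq_one_left h1
  have hmemc : ∀ z : ZMod p, powz z ∈ spectrum ℂ A → powz (c * z) ∈ spectrum ℂ A := by
    intro z hz'
    have h1 : powz (c * z) = powz z ^ k := by rw [mul_comm, hpow_mul]
    rw [h1]
    exact hσ_powk _ hz'
  have hmemneg : ∀ z : ZMod p, powz z ∈ spectrum ℂ A → powz (-z) ∈ spectrum ℂ A := by
    intro z hz'
    rw [hpow_neg]
    exact hσ_inv _ hz' (pow_ne_zero _ hlam0)
  have hm1 : powz 1 ∈ spectrum ℂ A := by
    have h1 : powz 1 = lam := by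
      show lam ^ (1 : ZMod p).val = lam
      rw [ZMod.val_one, pow_one]
    rwa [h1]
  have hmc : powz c ∈ spectrum ℂ A := by
    have := hmemc 1 hm1
    rwa [mul_one] at this
  have hmc2 : powz (c ^ 2) ∈ spectrum ℂ A := by
    have := hmemc c hmc
    rwa [← pow_two] at this
  have hmn1 : powz (-1) ∈ spectrum ℂ A := hmemneg 1 hm1
  have hmnc : powz (-c) ∈ spectrum ℂ A := hmemneg c hmc
  have hmnc2 : powz (-(c ^ 2)) ∈ spectrum ℂ A := hmemneg (c ^ 2) hmc2
  -- distinctness facts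
  have hcross : ∀ i j : ℕ, i ≤ 2 → j ≤ 2 → c ^ i ≠ -c ^ j := by
    intro i j hi hj hcontra
    have hsq : c ^ (i * 2) = c ^ (j * 2) := by
      have h1 : (c ^ i) ^ 2 = (-c ^ j) ^ 2 := by rw [hcontra]
      rwa [neg_sq, ← pow_mul, ← pow_mul] at h1
    have hmod := hcmod _ _ hsq
    have hcop : Nat.gcd q 2 = 1 := (hq.coprime_iff_not_dvd.mpr
      (fun hd2 => by have := Nat.le_of_dvd (by omega) hd2; omega) : q.Coprime 2)
    have hmod2 : 2 * i ≡ 2 * j [MOD q] := by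
      rwa [Nat.mul_comm i 2, Nat.mul_comm j 2] at hmod
    have hij := Nat.ModEq.cancel_left_of_coprime hcop hmod2
    have hije : i = j := hij.eq_of_lt_of_lt (by omega) (by omega)
    subst hije
    have h2 : (2 : ZMod p) * c ^ i = 0 := by
      rw [two_mul]
      exact eq_neg_iff_add_eq_zero.mp hcontra
    rcases mul_eq_zero.mp h2 with h | h
    · exact h2p h
    · exact pow_ne_zero i hc0 h
  have n1 : c ≠ 1 := hc1
  have n2 : c ^ 2 ≠ 1 := pow_ne_one_of_lt_orderOf two_ne_zero (by rw [hordc]; omega)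
  have n3 : c ^ 2 ≠ c := by
    intro hcc
    have h1 : c ^ 2 = c ^ 1 := by rwa [pow_one]
    have h2 := hcmod _ _ h1
    have h3 : 2 % q = 1 % q := h2
    rw [Nat.mod_eq_of_lt (by omega), Nat.mod_eq_of_lt (by omega)] at h3
    omega
  have m1 : (1 : ZMod p) ∉ ({c, c ^ 2, -1, -c, -(c ^ 2)} : Finset (ZMod p)) := by
    simp only [Finset.mem_insert, Finset.mem_singleton]
    push_neg
    refine ⟨fun h' => n1 h'.symm, fun h' => n2 h'.symm, ?_, ?_, ?_⟩
    · simpa using hcross 0 0 (by omega) (by omega)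
    · simpa using hcross 0 1 (by omega) (by omega)
    · simpa using hcross 0 2 (by omega) (by omega)
  have m2 : c ∉ ({c ^ 2, -1, -c, -(c ^ 2)} : Finset (ZMod p)) := by
    simp only [Finset.mem_insert, Finset.mem_singleton]
    push_neg
    refine ⟨fun h' => n3 h'.symm, ?_, ?_, ?_⟩
    · simpa using hcross 1 0 (by omega) (by omega)
    · simpa using hcross 1 1 (by omega) (by omega)
    · simpa using hcross 1 2 (by omega) (by omega)
  have m3 : c ^ 2 ∉ ({-1, -c, -(c ^ 2)} : Finset (ZMod p)) := by
    simp only [Finset.mem_insert, Finset.mem_singleton]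
    push_neg
    refine ⟨?_, ?_, ?_⟩
    · simpa using hcross 2 0 (by omega) (by omega)
    · simpa using hcross 2 1 (by omega) (by omega)
    · simpa using hcross 2 2 (by omega) (by omega)
  have m4 : (-1 : ZMod p) ∉ ({-c, -(c ^ 2)} : Finset (ZMod p)) := by
    simp only [Finset.mem_insert, Finset.mem_singleton]
    push_neg
    constructor
    · intro h'; exact n1 (neg_injective h').symm
    · intro h'; exact n2 (neg_injective h').symm
  have m5 : (-c : ZMod p) ∉ ({-(c ^ 2)} : Finset (ZMod p)) := by
    simp only [Finset.mem_singleton]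
    intro h'
    exact n3 (neg_injective h').symm
  have hTcard : ({(1 : ZMod p), c, c ^ 2, -1, -c, -(c ^ 2)} : Finset (ZMod p)).card = 6 := by
    rw [Finset.card_insert_of_notMem m1, Finset.card_insert_of_notMem m2,
      Finset.card_insert_of_notMem m3, Finset.card_insert_of_notMem m4,
      Finset.card_insert_of_notMem m5, Finset.card_singleton]
  have hmemT : ∀ z ∈ ({(1 : ZMod p), c, c ^ 2, -1, -c, -(c ^ 2)} : Finset (ZMod p)),
      powz z ∈ spectrum ℂ A := by
    intro z hzT
    simp only [Finset.mem_insert, Finset.mem_singleton] at hzT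
    rcases hzT with rfl | rfl | rfl | rfl | rfl | rfl
    exacts [hm1, hmc, hmc2, hmn1, hmnc, hmnc2]
  have himg : ((({(1 : ZMod p), c, c ^ 2, -1, -c, -(c ^ 2)} : Finset (ZMod p))).image powz).card
      = 6 := by
    rw [Finset.card_image_of_injective _ hpowz_inj, hTcard]
  have hsub : (({(1 : ZMod p), c, c ^ 2, -1, -c, -(c ^ 2)} : Finset (ZMod p))).image powz
      ⊆ A.charpoly.roots.toFinset := by
    intro μ hμ
    rw [Finset.mem_image] at hμ
    obtain ⟨z, hzT, rfl⟩ := hμ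
    rw [Multiset.mem_toFinset, Polynomial.mem_roots']
    exact ⟨A.charpoly_monic.ne_zero, spec_isRoot_charpoly (hmemT z hzT)⟩
  have hroots4 : A.charpoly.roots.toFinset.card ≤ 4 := by
    refine le_trans (Multiset.toFinset_card_le _) (le_trans (Polynomial.card_roots' _) ?_)
    rw [Matrix.charpoly_natDegree_eq_dim]
    simp
  have hfin := Finset.card_le_card hsub
  omega
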